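/- Let σ > 0 and let ψ be holomorphic on [-1,1]_σ with ψ([-1,1]) ⊆ [-1,1] and λ(ψ) ≤ 1 (i.e. ‖ψ^{(n)}‖_{∞,[-1,1]} ≤ n! for every n ≥ 1). Then ψ verifies the E(1) property; more precisely, for every A ∈ (0, min(1/2, σ)) and every integer p ≥ 1 one has ψ([-1,1]_{1,A,p+1}) ⊆ [-1,1]_{1,A,p}, i.e. if dist(z, I) < A/(p+1) then dist(ψ(z), I) < A/p. -/

import Mathlib

open Metric Set Filter

noncomputable section

/-- The segment `[-1,1]` viewed inside `ℂ`. -/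
def seg : Set ℂ := (fun x : ℝ => (x : ℂ)) '' Set.Icc (-1) 1

/-- The neighborhood `[-1,1]_r` of the segment. -/
def nbd (r : ℝ) : Set ℂ := {z : ℂ | Metric.infDist z seg < r}

/-- The set `[-1,1]_{k,A,n}`. -/
def tube (k A : ℝ) (n : ℕ) : Set ℂ :=
  {z : ℂ | Metric.infDist z seg < A * (n : ℝ) ^ (-(1 : ℝ) / k)}

/-- Sup norm of `f` on `S`. -/
def supOn (f : ℂ → ℂ) (S : Set ℂ) : ℝ := sSup ((fun z => ‖f z‖) '' S)

/-- The Gevrey class `G_k([-1,1])`. -/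
def GevreyClass (k : ℝ) (f : ℝ → ℂ) : Prop :=
  ContDiffOn ℝ (⊤ : ℕ∞) f (Set.Icc (-1) 1) ∧
  ∃ C > 0, ∃ A > 0, ∀ n : ℕ, ∀ x ∈ Set.Icc (-1 : ℝ) 1,
    ‖iteratedDerivWithin n f (Set.Icc (-1 : ℝ) 1) x‖ ≤
      C * A ^ n * (n : ℝ) ^ ((n : ℝ) * (1 + 1 / k))

/-- `(f_n)_{n ≥ 1}` is a `k`-sequence. -/
def IsKSeq (k : ℝ) (f : ℕ → ℂ → ℂ) : Prop :=
  ∃ B > 0, ∃ C > 0, ∃ θ ∈ Set.Ioo (0 : ℝ) 1, ∀ n : ℕ, 1 ≤ n →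
    DifferentiableOn ℂ (f n) (tube k B n) ∧ ∀ z ∈ tube k B n, ‖f n z‖ ≤ C * θ ^ n

/-- The `E(k)` property with threshold `τ` for a sequence of functions on `[-1,1]_σ`. -/
def EPropWith (k σ : ℝ) (φ : ℕ → ℂ → ℂ) (τ : ℝ) : Prop :=
  0 < τ ∧ τ ≤ σ ∧ ∀ A : ℝ, 0 < A → A ≤ τ → ∃ M : ℕ, ∀ n : ℕ, M ≤ n → ∀ p : ℕ,
    ∀ z ∈ tube k A (n + 1), φ p z ∈ tube k A n

/-- The `E(k)` property. -/
def EProp (k σ : ℝ) (φ : ℕ → ℂ → ℂ) : Prop := ∃ τ : ℝ, EPropWith k σ φ τ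

/-- `T` is a linear operator on functions. -/
def IsLinOp (T : (ℂ → ℂ) → ℂ → ℂ) : Prop :=
  (∀ f g : ℂ → ℂ, T (f + g) = T f + T g) ∧ ∀ (c : ℂ) (f : ℂ → ℂ), T (c • f) = c • T f

/-- The quantitative part of the `A(k)` property, for a given `A` and integer `N = N(A)`. -/
def APropAt (k : ℝ) (T : (ℂ → ℂ) → ℂ → ℂ) (ρ A : ℝ) (N : ℕ) : Prop :=
  ∀ n : ℕ, N ≤ n → ∀ f : ℂ → ℂ, DifferentiableOn ℂ f (tube k A n) →
    BddAbove ((fun z => ‖f z‖) '' tube k A n) →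
    DifferentiableOn ℂ (T f) (tube k A (n + 1)) ∧
      ∀ z ∈ tube k A (n + 1), ‖T f z‖ ≤ ρ * supOn f (tube k A n)

/-- The `A(k)` property with `k`-threshold `τ` and contraction constant `ρ`. -/
def AProp (k : ℝ) (T : (ℂ → ℂ) → ℂ → ℂ) (τ ρ : ℝ) : Prop :=
  0 < τ ∧ ρ ∈ Set.Ioo (0 : ℝ) 1 ∧
  (∀ A : ℝ, 0 < A → A ≤ τ → ∃ N : ℕ, APropAt k T ρ A N) ∧
  (∀ f : ℂ → ℂ, (∃ r > 0, DifferentiableOn ℂ f (nbd r)) →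
      ∀ z ∈ seg, ‖T f z‖ ≤ ρ * supOn f seg)

lemma seg_compact : IsCompact seg :=
  isCompact_Icc.image Complex.continuous_ofReal

lemma seg_nonempty : seg.Nonempty :=
  ⟨(0:ℂ), ⟨0, by norm_num, rfl⟩⟩

lemma tube_one_mem (A : ℝ) (n : ℕ) (z : ℂ) :
    z ∈ tube 1 A n ↔ Metric.infDist z seg < A * ((n : ℝ))⁻¹ := by
  unfold tube
  rw [show -(1:ℝ)/1 = -1 by norm_num, Real.rpow_neg_one]
  exact Iff.rfl

lemma key_step (σ : ℝ) (ψ : ℂ → ℂ) (hψd : DifferentiableOn ℂ ψ (nbd σ))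
    (hψseg : ∀ z ∈ seg, ψ z ∈ seg)
    (hlam : ∀ n : ℕ, 1 ≤ n → ∀ z ∈ seg, ‖iteratedDeriv n ψ z‖ ≤ (n.factorial : ℝ))
    {A : ℝ} (hA0 : 0 < A) (hA2 : A < 1/2) (hAσ : A < σ)
    {p : ℕ} (hp : 1 ≤ p) {z : ℂ} (hz : z ∈ tube 1 A (p+1)) : ψ z ∈ tube 1 A p := by
  rw [tube_one_mem] at hz ⊢
  obtain ⟨x, hxseg, hxd⟩ := seg_compact.exists_infDist_eq_dist seg_nonempty z
  set r := dist z x with hrdef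
  have hr0 : 0 ≤ r := dist_nonneg
  have hpp : (0:ℝ) < (p:ℝ) := by exact_mod_cast hp
  have hp1 : (0:ℝ) < (p:ℝ) + 1 := by linarith
  have h1 : r < A * ((p:ℝ)+1)⁻¹ := by
    rw [← hxd]
    convert hz using 3
    push_cast; ring
  have hrA : r * ((p:ℝ)+1) < A := by
    calc r * ((p:ℝ)+1) < (A * ((p:ℝ)+1)⁻¹) * ((p:ℝ)+1) := by
          exact mul_lt_mul_of_pos_right h1 hp1
      _ = A := by field_simp
  have hrhalf : r < 1/2 := by nlinarith
  -- set up the power series at x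
  set Rr : ℝ := (r + σ)/2 with hRrdef
  have hrσ : r < σ := by nlinarith
  have hRr0 : 0 < Rr := by rw [hRrdef]; linarith
  have hrR : r < Rr := by rw [hRrdef]; linarith
  have hRσ : Rr < σ := by rw [hRrdef]; linarith
  set R : NNReal := Rr.toNNReal with hRdef
  have hRcoe : (R : ℝ) = Rr := Real.coe_toNNReal _ hRr0.le
  have hRpos : 0 < R := Real.toNNReal_pos.mpr hRr0
  have hsub : Metric.closedBall x (R:ℝ) ⊆ nbd σ := by
    intro w hw
    rw [Metric.mem_closedBall] at hw
    have : Metric.infDist w seg ≤ dist w x := Metric.infDist_le_dist_of_mem hxseg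
    have : Metric.infDist w seg < σ := by rw [hRcoe] at hw; linarith
    exact this
  have h := (hψd.mono hsub).hasFPowerSeriesOnBall hRpos
  set y : ℂ := z - x with hydef
  have hynorm : ‖y‖ = r := by rw [hydef, ← dist_eq_norm]
  have hy : y ∈ Metric.eball (0:ℂ) R := by
    rw [mem_emetric_ball_zero_iff, enorm_eq_nnnorm, ENNReal.coe_lt_coe, ← NNReal.coe_lt_coe, coe_nnnorm,
      hynorm, hRcoe]
    linarith
  set t : ℕ → ℂ := fun n => ((n.factorial : ℂ))⁻¹ • (y^n • iteratedDeriv n ψ x) with htdef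
  have hterm : ∀ n : ℕ, (iteratedFDeriv ℂ n ψ x fun _ => y) = y^n • iteratedDeriv n ψ x := by
    intro n
    have hy1 : (fun _ : Fin n => y) = fun _ : Fin n => y • (1:ℂ) := by
      funext i; simp
    rw [hy1, (iteratedFDeriv ℂ n ψ x).map_smul_univ, iteratedDeriv_eq_iteratedFDeriv]
    simp
  have hs' : HasSum t (ψ z) := by
    have hsum := h.hasSum_iteratedFDeriv hy
    rw [show x + y = z by rw [hydef]; ring] at hsum
    simp only [hterm] at hsum
    exact hsum
  have hs2 := (hasSum_nat_add_iff' 1).2 hs'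
  have hsum0 : (∑ i ∈ Finset.range 1, t i) = ψ x := by
    simp [htdef]
  rw [hsum0] at hs2
  have hbound : ∀ n : ℕ, ‖t (n+1)‖ ≤ r^(n+1) := by
    intro n
    have hd := hlam (n+1) (Nat.le_add_left 1 n) x hxseg
    have hfac : (0:ℝ) < ((n+1).factorial : ℝ) := by positivity
    have : ‖t (n+1)‖ = (((n+1).factorial : ℝ))⁻¹ * (r^(n+1) * ‖iteratedDeriv (n+1) ψ x‖) := by
      simp [htdef, norm_smul, norm_pow, hynorm]
      try ring
    rw [this]
    calc (((n+1).factorial : ℝ))⁻¹ * (r^(n+1) * ‖iteratedDeriv (n+1) ψ x‖)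
        ≤ (((n+1).factorial : ℝ))⁻¹ * (r^(n+1) * ((n+1).factorial : ℝ)) := by
          gcongr
      _ = r^(n+1) := by field_simp
  have hgeo : HasSum (fun n : ℕ => r^(n+1)) (r * (1-r)⁻¹) := by
    have := (hasSum_geometric_of_lt_one hr0 (by linarith : r < 1)).mul_left r
    simpa [pow_succ, mul_comm] using this
  have hnorm : ‖ψ z - ψ x‖ ≤ r * (1-r)⁻¹ := by
    have hle := tsum_of_norm_bounded hgeo hbound
    rwa [hs2.tsum_eq] at hle
  have hle : Metric.infDist (ψ z) seg ≤ r * (1-r)⁻¹ := by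
    refine le_trans (Metric.infDist_le_dist_of_mem (hψseg x hxseg)) ?_
    rw [dist_eq_norm]; exact hnorm
  have hfin : r * (1-r)⁻¹ < A * ((p:ℝ))⁻¹ := by
    rw [← div_eq_mul_inv, ← div_eq_mul_inv, div_lt_div_iff₀ (by linarith) hpp]
    nlinarith [mul_nonneg hr0 (by linarith : (0:ℝ) ≤ 1 - A)]
  exact lt_of_le_of_lt hle hfin

/-- a function `ψ`, holomorphic on `[-1,1]_σ`, mapping `[-1,1]` to
itself and with `λ(ψ) ≤ 1`, verifies the `E(1)` property; more precisely
`ψ([-1,1]_{1,A,p+1}) ⊆ [-1,1]_{1,A,p}` for `0 < A < min (1/2) σ` and `p ≥ 1`. -/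
theorem lambda_le_one_implies_E1 (σ : ℝ) (hσ : 0 < σ) (ψ : ℂ → ℂ)
    (hψd : DifferentiableOn ℂ ψ (nbd σ))
    (hψseg : ∀ z ∈ seg, ψ z ∈ seg)
    (hlam : ∀ n : ℕ, 1 ≤ n → ∀ z ∈ seg, ‖iteratedDeriv n ψ z‖ ≤ (n.factorial : ℝ)) :
    EProp 1 σ (fun _ : ℕ => ψ) ∧
    ∀ A : ℝ, 0 < A → A < min (1 / 2) σ → ∀ p : ℕ, 1 ≤ p →
      ∀ z ∈ tube 1 A (p + 1), ψ z ∈ tube 1 A p := by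
  constructor
  · refine ⟨min (1/4) (σ/2), by positivity, (min_le_right _ _).trans (by linarith), ?_⟩
    intro A hA0 hAτ
    refine ⟨1, fun n hn p z hz => ?_⟩
    exact key_step σ ψ hψd hψseg hlam hA0
      (lt_of_le_of_lt (hAτ.trans (min_le_left _ _)) (by norm_num))
      (lt_of_le_of_lt (hAτ.trans (min_le_right _ _)) (by linarith)) hn hz
  · intro A hA0 hAlt p hp z hz
    rw [lt_min_iff] at hAlt
    exact key_step σ ψ hψd hψseg hlam hA0 hAlt.1 hAlt.2 hp hz
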